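/- Let L be a positive-definite even unimodular integral lattice and ν an isometry of L with ν^m = id for some positive integer m. Suppose that the fixed-point lattice L^ν = {x ∈ L : νx = x}, equipped with the restriction of the form of L, is isometric to √2·D_12^+ (that is, to D_12^+ with its standard form multiplied by 2). Then π_ν(L) = (1/2)·L^ν as subsets of L ⊗_ℤ ℚ, where π_ν = (1/m) Σ_{k=0}^{m−1} ν^k. -/

import Mathlib

open scoped RealInnerProductSpace Pointwise

/-- The lattice `D₁₂⁺ ⊆ ℝ¹²`: all coordinates integers or all coordinates half-integers,
with coordinate sum in `2ℤ`. -/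
def D12plus : Set (EuclideanSpace ℝ (Fin 12)) :=
  {x | ((∀ i, ∃ n : ℤ, x i = (n : ℝ)) ∨ (∀ i, ∃ n : ℤ, x i = (n : ℝ) + 1 / 2)) ∧
    ∃ m : ℤ, ∑ i, x i = 2 * (m : ℝ)}

lemma D12_inner (u v : EuclideanSpace ℝ (Fin 12)) (hu : u ∈ D12plus) (hv : v ∈ D12plus) :
    ∃ n : ℤ, ⟪u, v⟫ = (n : ℝ) := by
  obtain ⟨hu1, mu, hmu⟩ := hu
  obtain ⟨hv1, mv, hmv⟩ := hv
  have hip : ⟪u, v⟫ = ∑ i, u i * v i := by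
    simp [PiLp.inner_apply, RCLike.inner_apply, mul_comm]
  rw [hip]
  rcases hu1 with hu1 | hu1 <;> rcases hv1 with hv1 | hv1
  · choose a ha using hu1
    choose c hc using hv1
    refine ⟨∑ i, a i * c i, ?_⟩
    rw [Finset.sum_congr rfl (fun i _ => by rw [ha i, hc i] :
      ∀ i ∈ Finset.univ, u i * v i = (a i : ℝ) * (c i : ℝ))]
    push_cast
    ring
  · choose a ha using hu1
    choose c hc using hv1
    have hsa : (∑ i, (a i : ℝ)) = 2 * mu := by
      rw [← hmu]; exact (Finset.sum_congr rfl fun i _ => (ha i).symm)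
    refine ⟨∑ i, a i * c i + mu, ?_⟩
    rw [Finset.sum_congr rfl (fun i _ => by rw [ha i, hc i] :
      ∀ i ∈ Finset.univ, u i * v i = (a i : ℝ) * ((c i : ℝ) + 1/2))]
    have : ∑ i, (a i : ℝ) * ((c i : ℝ) + 1/2)
        = (∑ i, (a i : ℝ) * (c i : ℝ)) + (∑ i, (a i : ℝ)) * (1/2) := by
      calc ∑ i, (a i : ℝ) * ((c i : ℝ) + 1/2)
          = ∑ i, ((a i : ℝ) * (c i : ℝ) + (a i : ℝ) * (1/2)) :=
            Finset.sum_congr rfl fun i _ => by ring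
        _ = _ := by rw [Finset.sum_add_distrib, ← Finset.sum_mul]
    rw [this, hsa]
    push_cast
    ring
  · choose a ha using hu1
    choose c hc using hv1
    have hsc : (∑ i, (c i : ℝ)) = 2 * mv := by
      rw [← hmv]; exact (Finset.sum_congr rfl fun i _ => (hc i).symm)
    refine ⟨∑ i, a i * c i + mv, ?_⟩
    rw [Finset.sum_congr rfl (fun i _ => by rw [ha i, hc i] :
      ∀ i ∈ Finset.univ, u i * v i = ((a i : ℝ) + 1/2) * (c i : ℝ))]
    have : ∑ i, ((a i : ℝ) + 1/2) * (c i : ℝ)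
        = (∑ i, (a i : ℝ) * (c i : ℝ)) + (∑ i, (c i : ℝ)) * (1/2) := by
      calc ∑ i, ((a i : ℝ) + 1/2) * (c i : ℝ)
          = ∑ i, ((a i : ℝ) * (c i : ℝ) + (c i : ℝ) * (1/2)) :=
            Finset.sum_congr rfl fun i _ => by ring
        _ = _ := by rw [Finset.sum_add_distrib, ← Finset.sum_mul]
    rw [this, hsc]
    push_cast
    ring
  · choose a ha using hu1
    choose c hc using hv1
    have hsa : (∑ i, (a i : ℝ)) = 2 * mu - 6 := by
      have := Finset.sum_congr rfl (fun i (_ : i ∈ Finset.univ) => ha i)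
      rw [this] at hmu
      rw [Finset.sum_add_distrib] at hmu
      simp at hmu
      linarith
    have hsc : (∑ i, (c i : ℝ)) = 2 * mv - 6 := by
      have := Finset.sum_congr rfl (fun i (_ : i ∈ Finset.univ) => hc i)
      rw [this] at hmv
      rw [Finset.sum_add_distrib] at hmv
      simp at hmv
      linarith
    refine ⟨∑ i, a i * c i + mu + mv - 3, ?_⟩
    rw [Finset.sum_congr rfl (fun i _ => by rw [ha i, hc i] :
      ∀ i ∈ Finset.univ, u i * v i = ((a i : ℝ) + 1/2) * ((c i : ℝ) + 1/2))]
    have : ∑ i, ((a i : ℝ) + 1/2) * ((c i : ℝ) + 1/2)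
        = (∑ i, (a i : ℝ) * (c i : ℝ)) + (∑ i, (a i : ℝ)) * (1/2)
          + (∑ i, (c i : ℝ)) * (1/2) + 3 := by
      have h12 : ∑ i : Fin 12, (1/4 : ℝ) = 3 := by simp; norm_num
      calc ∑ i, ((a i : ℝ) + 1/2) * ((c i : ℝ) + 1/2)
          = ∑ i, ((a i : ℝ) * (c i : ℝ) + (a i : ℝ) * (1/2) + (c i : ℝ) * (1/2) + 1/4) :=
            Finset.sum_congr rfl fun i _ => by ring
        _ = _ := by
            rw [Finset.sum_add_distrib, Finset.sum_add_distrib, Finset.sum_add_distrib,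
              ← Finset.sum_mul, ← Finset.sum_mul, h12]
    rw [this, hsa, hsc]
    push_cast
    ring

lemma D12_single_add (i j : Fin 12) (hij : i ≠ j) (c : ℤ) (hc : c = 1 ∨ c = -1) :
    EuclideanSpace.single i (1:ℝ) + EuclideanSpace.single j (c:ℝ) ∈ D12plus := by
  have happ : ∀ k, (EuclideanSpace.single i (1:ℝ) + EuclideanSpace.single j (c:ℝ)) k
      = (if k = i then (1:ℝ) else 0) + (if k = j then (c:ℝ) else 0) := by
    intro k; simp [EuclideanSpace.single_apply]
  constructor
  · left
    intro k
    refine ⟨(if k = i then 1 else 0) + (if k = j then c else 0), ?_⟩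
    rw [happ]
    push_cast
    split_ifs <;> simp
  · have : ∑ k, (EuclideanSpace.single i (1:ℝ) + EuclideanSpace.single j (c:ℝ)) k
        = 1 + c := by
      rw [Finset.sum_congr rfl fun k _ => happ k, Finset.sum_add_distrib]
      simp
    rw [this]
    rcases hc with h | h <;> subst h
    · exact ⟨1, by norm_num⟩
    · exact ⟨0, by norm_num⟩

noncomputable def halfvec : EuclideanSpace ℝ (Fin 12) :=
  (WithLp.equiv 2 (Fin 12 → ℝ)).symm (fun _ => 1/2)

lemma halfvec_apply (k : Fin 12) : halfvec k = 1/2 := rfl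

lemma halfvec_mem : halfvec ∈ D12plus := by
  constructor
  · right
    exact fun k => ⟨0, by rw [halfvec_apply]; norm_num⟩
  · refine ⟨3, ?_⟩
    rw [Finset.sum_congr rfl fun k _ => halfvec_apply k]
    simp
    norm_num

lemma D12_selfdual (w : EuclideanSpace ℝ (Fin 12))
    (hw : ∀ d ∈ D12plus, ∃ n : ℤ, ⟪w, d⟫ = (n : ℝ)) : w ∈ D12plus := by
  have hip : ∀ d : EuclideanSpace ℝ (Fin 12), ⟪w, d⟫ = ∑ k, w k * d k := by
    intro d; simp [PiLp.inner_apply, RCLike.inner_apply, mul_comm]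
  -- pairwise sums and differences are integers
  have hpm : ∀ (i j : Fin 12), i ≠ j → ∀ c : ℤ, c = 1 ∨ c = -1 →
      ∃ n : ℤ, w i + w j * (c:ℝ) = n := by
    intro i j hij c hc
    obtain ⟨n, hn⟩ := hw _ (D12_single_add i j hij c hc)
    refine ⟨n, ?_⟩
    rw [hip] at hn
    have : ∑ k, w k * (EuclideanSpace.single i (1:ℝ) + EuclideanSpace.single j (c:ℝ)) k
        = w i + w j * (c:ℝ) := by
      rw [Finset.sum_congr rfl (fun k _ => by
        simp [EuclideanSpace.single_apply, mul_add] :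
        ∀ k ∈ Finset.univ, w k * (EuclideanSpace.single i (1:ℝ)
          + EuclideanSpace.single j (c:ℝ)) k
          = (if k = i then w k else 0) + (if k = j then w k * (c:ℝ) else 0))]
      rw [Finset.sum_add_distrib]
      simp
    rw [this] at hn
    exact hn
  -- sum of coordinates is an even integer
  have hsum : ∃ n : ℤ, ∑ k, w k = 2 * (n : ℝ) := by
    obtain ⟨n, hn⟩ := hw _ halfvec_mem
    refine ⟨n, ?_⟩
    rw [hip] at hn
    have : ∑ k, w k * halfvec k = (∑ k, w k) * (1/2) := by
      calc ∑ k, w k * halfvec k = ∑ k, w k * (1/2) :=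
            Finset.sum_congr rfl fun k _ => by rw [halfvec_apply]
        _ = _ := by rw [← Finset.sum_mul]
    rw [this] at hn
    linarith
  obtain ⟨t, ht⟩ : ∃ t : ℤ, 2 * w 0 = t := by
    obtain ⟨n1, hn1⟩ := hpm 0 1 (by decide) 1 (Or.inl rfl)
    obtain ⟨n2, hn2⟩ := hpm 0 1 (by decide) (-1) (Or.inr rfl)
    refine ⟨n1 + n2, ?_⟩
    push_cast
    push_cast at hn1 hn2
    linarith
  have hk : ∀ i : Fin 12, ∃ n : ℤ, w i - w 0 = n := by
    intro i
    by_cases h : i = 0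
    · exact ⟨0, by subst h; simp⟩
    · obtain ⟨n, hn⟩ := hpm i 0 h (-1) (Or.inr rfl)
      refine ⟨n, ?_⟩
      push_cast at hn
      linarith
  choose k hkk using hk
  refine ⟨?_, hsum⟩
  rcases Int.even_or_odd t with ⟨s, hs⟩ | ⟨s, hs⟩
  · left
    intro i
    refine ⟨s + k i, ?_⟩
    have h0 : w 0 = s := by rw [hs] at ht; push_cast at ht ⊢; linarith
    have := hkk i
    push_cast
    linarith
  · right
    intro i
    refine ⟨s + k i, ?_⟩
    have h0 : w 0 = s + 1/2 := by rw [hs] at ht; push_cast at ht ⊢; linarith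
    have := hkk i
    push_cast
    linarith

lemma aux_zmod2_top (F : Type*) [AddCommGroup F] [Module (ZMod 2) F]
    [Module.Finite (ZMod 2) F]
    (b : F → F → ZMod 2)
    (hba : ∀ x y z, b (x + y) z = b x z + b y z)
    (hbb : ∀ x y z, b x (y + z) = b x y + b x z)
    (S : Submodule (ZMod 2) F)
    (hS : ∀ y : F, (∀ t ∈ S, b y t = 0) → y = 0) : S = ⊤ := by
  have : FiniteDimensional (ZMod 2) F := inferInstance
  let e : F →+ Module.Dual (ZMod 2) S :=
    AddMonoidHom.mk'
      (fun y => ((AddMonoidHom.mk' (b y) (hbb y)).toZModLinearMap 2).domRestrict S)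
      (fun x y => by ext t; simp [hba])
  let Φ : F →ₗ[ZMod 2] Module.Dual (ZMod 2) S := e.toZModLinearMap 2
  have hΦ : Function.Injective Φ := by
    rw [injective_iff_map_eq_zero]
    intro y hy
    exact hS y fun t ht => by
      have := congrArg (fun g => g ⟨t, ht⟩) hy
      simpa [Φ, e] using this
  have h1 : Module.finrank (ZMod 2) F
      ≤ Module.finrank (ZMod 2) (Module.Dual (ZMod 2) S) :=
    LinearMap.finrank_le_finrank_of_injective hΦ
  rw [Subspace.dual_finrank_eq] at h1
  exact Submodule.eq_top_of_finrank_eq (le_antisymm (Submodule.finrank_le S) h1)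

set_option maxHeartbeats 1000000 in
/-- Let `L` be a positive-definite even unimodular lattice (realised as a full ℤ-lattice in a
finite-dimensional rational vector space, unimodularity being self-duality) and `ν` an isometry
of `L` with `ν^m = id` whose fixed-point lattice `L^ν` is isometric to `√2·D₁₂⁺`
(i.e. to `D₁₂⁺` with its form doubled). Then `π_ν(L) = (1/2)·L^ν`, where
`π_ν = (1/m) ∑_{k<m} ν^k`. -/
theorem projection_eq_half_fixed_lattice
    (V : Type*) [AddCommGroup V] [Module ℚ V] [FiniteDimensional ℚ V]
    (B : V →ₗ[ℚ] V →ₗ[ℚ] ℚ) (hsymm : ∀ x y, B x y = B y x)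
    (L : Submodule ℤ V) (hfg : L.FG)
    (hspan : Submodule.span ℚ (L : Set V) = ⊤)
    (hint : ∀ x ∈ L, ∀ y ∈ L, ∃ n : ℤ, B x y = (n : ℚ))
    (heven : ∀ x ∈ L, ∃ n : ℤ, B x x = 2 * (n : ℚ))
    (hpos : ∀ x ∈ L, x ≠ 0 → 0 < B x x)
    (hself : (L : Set V) = {x | ∀ y ∈ L, ∃ n : ℤ, B x y = (n : ℚ)})
    (ν : V ≃ₗ[ℚ] V) (hiso : ∀ x y, B (ν x) (ν y) = B x y)
    (hνL : ∀ x, x ∈ L ↔ ν x ∈ L)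
    (m : ℕ) (hmpos : 0 < m) (hord : ∀ x, (ν ^ m) x = x)
    (Lν : Submodule ℤ V) (hLν : (Lν : Set V) = {x | x ∈ L ∧ ν x = x})
    (f : Lν →+ EuclideanSpace ℝ (Fin 12))
    (hfinj : Function.Injective f) (hfrange : Set.range f = D12plus)
    (hform : ∀ x y : Lν, ((B (x : V) (y : V) : ℚ) : ℝ) = 2 * ⟪f x, f y⟫) :
    (fun v => (m : ℚ)⁻¹ • ∑ k ∈ Finset.range m, (ν ^ k) v) '' (L : Set V)
      = (2 : ℚ)⁻¹ • (Lν : Set V) := by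
  classical
  have hmQ : (m : ℚ) ≠ 0 := Nat.cast_ne_zero.mpr hmpos.ne'
  set P : V →ₗ[ℚ] V :=
    (m : ℚ)⁻¹ • ∑ k ∈ Finset.range m, ((ν ^ k : V ≃ₗ[ℚ] V) : V →ₗ[ℚ] V) with hPdef
  have hPapply : ∀ v, P v = (m : ℚ)⁻¹ • ∑ k ∈ Finset.range m, (ν ^ k) v := by
    intro v
    simp [hPdef, LinearMap.sum_apply]
  -- membership in Lν
  have hΛmem : ∀ z : V, z ∈ Lν ↔ (z ∈ L ∧ ν z = z) := by
    intro z
    constructor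
    · intro hz; exact (Set.ext_iff.mp hLν z).mp hz
    · intro hz; exact (Set.ext_iff.mp hLν z).mpr hz
  have hνpow_mem : ∀ (k : ℕ), ∀ x ∈ L, (ν ^ k) x ∈ L := by
    intro k
    induction k with
    | zero => intro x hx; simpa using hx
    | succ k ih =>
        intro x hx
        rw [pow_succ]
        exact ih _ ((hνL x).mp hx)
  have hfix_pow : ∀ (k : ℕ) (x : V), ν x = x → (ν ^ k) x = x := by
    intro k x hx
    induction k with
    | zero => simp
    | succ k ih =>
        rw [pow_succ]
        show (ν ^ k) (ν x) = x
        rw [hx, ih]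
  have hνP : ∀ v, ν (P v) = P v := by
    intro v
    rw [hPapply, map_smul, map_sum]
    congr 1
    have hstep : ∀ k, ν ((ν ^ k) v) = (ν ^ (k + 1)) v := by
      intro k
      rw [pow_succ']
      rfl
    rw [Finset.sum_congr rfl fun k _ => hstep k]
    have e1 := Finset.sum_range_succ (fun k => (ν ^ k) v) m
    have e2 := Finset.sum_range_succ' (fun k => (ν ^ k) v) m
    have : (∑ k ∈ Finset.range m, (ν ^ (k + 1)) v) + (ν ^ 0) v
        = (∑ k ∈ Finset.range m, (ν ^ k) v) + (ν ^ m) v := by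
      rw [← e2, ← e1]
    rw [hord v, pow_zero] at this
    simpa using add_right_cancel this
  have hPfix : ∀ v, ν v = v → P v = v := by
    intro v hv
    rw [hPapply, Finset.sum_congr rfl fun k _ => hfix_pow k v hv]
    rw [Finset.sum_const, Finset.card_range, ← Nat.cast_smul_eq_nsmul ℚ,
      smul_smul, inv_mul_cancel₀ hmQ, one_smul]
  have hmP : ∀ x, (m : ℚ) • P x = ∑ k ∈ Finset.range m, (ν ^ k) x := by
    intro x
    rw [hPapply, smul_smul, mul_inv_cancel₀ hmQ, one_smul]
  have hmPL : ∀ x ∈ L, (m : ℚ) • P x ∈ Lν := by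
    intro x hx
    rw [hΛmem]
    constructor
    · rw [hmP]
      exact Submodule.sum_mem L fun k _ => hνpow_mem k x hx
    · rw [map_smul, hνP]
  have hBpow : ∀ (k : ℕ) (x y : V), ν y = y → B ((ν ^ k) x) y = B x y := by
    intro k x y hy
    induction k with
    | zero => simp
    | succ k ih =>
        rw [pow_succ']
        show B (ν ((ν ^ k) x)) y = B x y
        calc B (ν ((ν ^ k) x)) y = B (ν ((ν ^ k) x)) (ν y) := by rw [hy]
          _ = B ((ν ^ k) x) y := hiso _ _
          _ = B x y := ih
  have hBP : ∀ x y, ν y = y → B (P x) y = B x y := by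
    intro x y hy
    rw [hPapply, map_smul, map_sum, LinearMap.smul_apply, LinearMap.sum_apply]
    rw [Finset.sum_congr rfl fun k _ => hBpow k x y hy]
    rw [Finset.sum_const, Finset.card_range]
    rw [← Nat.cast_smul_eq_nsmul ℚ, smul_smul, inv_mul_cancel₀ hmQ, one_smul]
  -- values of B on the fixed lattice are even integers
  have hBint2 : ∀ y y' : ↥Lν, ∃ n : ℤ, B (y : V) (y' : V) = 2 * (n : ℚ) := by
    intro y y'
    have hy := hform y y'
    have hmemy : f y ∈ D12plus := by rw [← hfrange]; exact ⟨y, rfl⟩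
    have hmemy' : f y' ∈ D12plus := by rw [← hfrange]; exact ⟨y', rfl⟩
    obtain ⟨n, hn⟩ := D12_inner (f y) (f y') hmemy hmemy'
    refine ⟨n, ?_⟩
    have : ((B (y : V) (y' : V) : ℚ) : ℝ) = ((2 * (n : ℚ) : ℚ) : ℝ) := by
      rw [hy, hn]; push_cast; ring
    exact_mod_cast this
  choose c hc using hBint2
  -- Key duality lemma via self-duality of D12plus
  have keyA : ∀ z : V, ν z = z → ∀ N : ℕ, 0 < N → ∀ hNz : N • z ∈ Lν,
      (∀ y : ↥Lν, ∃ n : ℤ, B z (y : V) = (n : ℚ)) →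
      ∃ w : ↥Lν, (w : V) = (2 : ℚ) • z := by
    intro z hz N hN hNz hint'
    have hNR : (N : ℝ) ≠ 0 := Nat.cast_ne_zero.mpr hN.ne'
    have hNQ : (N : ℚ) ≠ 0 := Nat.cast_ne_zero.mpr hN.ne'
    set Y : ↥Lν := ⟨N • z, hNz⟩ with hYdef
    set wv : EuclideanSpace ℝ (Fin 12) := ((N : ℝ)⁻¹ * 2) • f Y with hwv
    have hwd : ∀ d ∈ D12plus, ∃ n : ℤ, ⟪wv, d⟫ = (n : ℝ) := by
      intro d hd
      rw [← hfrange] at hd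
      obtain ⟨y', rfl⟩ := hd
      obtain ⟨n, hn⟩ := hint' y'
      refine ⟨n, ?_⟩
      have h3 : B (Y : V) (y' : V) = (N : ℚ) * (n : ℚ) := by
        show B ((N • z : V)) (y' : V) = _
        rw [← Nat.cast_smul_eq_nsmul ℚ, map_smul, LinearMap.smul_apply, hn]
        simp [smul_eq_mul]
      have h2 := hform Y y'
      rw [h3] at h2
      push_cast at h2
      have h4 : ⟪f Y, f y'⟫ = (N : ℝ) * (n : ℝ) / 2 := by linarith
      rw [hwv, real_inner_smul_left, h4]
      field_simp
    have hwD := D12_selfdual wv hwd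
    rw [← hfrange] at hwD
    obtain ⟨y₀, hy₀⟩ := hwD
    have h5 : f (N • y₀) = f (2 • Y) := by
      rw [map_nsmul, map_nsmul, hy₀, hwv]
      rw [← Nat.cast_smul_eq_nsmul ℝ ((N : ℕ)), ← Nat.cast_smul_eq_nsmul ℝ (2 : ℕ)]
      rw [smul_smul]
      congr 1
      push_cast
      field_simp
    have h6 : N • y₀ = 2 • Y := hfinj h5
    have h7 : N • (y₀ : V) = 2 • (Y : V) := by
      have := congrArg (Subtype.val) h6
      simpa using this
    have h8 : (N : ℚ) • (y₀ : V) = (N : ℚ) • ((2 : ℚ) • z) := by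
      rw [Nat.cast_smul_eq_nsmul ℚ, h7]
      show 2 • (N • z) = (N : ℚ) • ((2 : ℚ) • z)
      rw [← Nat.cast_smul_eq_nsmul ℚ (2 : ℕ), ← Nat.cast_smul_eq_nsmul ℚ N]
      rw [smul_smul, smul_smul]
      push_cast
      ring_nf
    refine ⟨y₀, ?_⟩
    exact smul_right_injective V hNQ h8
  have hΛsubL : ∀ y : ↥Lν, (y : V) ∈ L := fun y => ((hΛmem y).mp y.2).1
  have hΛfix : ∀ y : ↥Lν, ν (y : V) = y := fun y => ((hΛmem y).mp y.2).2
  -- 2 P x lies in the fixed lattice, for x ∈ L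
  have hhalf : ∀ x ∈ L, (2 : ℚ) • P x ∈ Lν := by
    intro x hx
    have := keyA (P x) (hνP x) m hmpos
      (by rw [← Nat.cast_smul_eq_nsmul ℚ] at *; exact hmPL x hx)
      (fun y => by
        rw [hBP x (y : V) (hΛfix y)]
        exact hint x hx (y : V) (hΛsubL y))
    obtain ⟨w, hw⟩ := this
    rw [← hw]
    exact w.2
  -- bilinearity of c over ℤ
  have hcast : ∀ (a b : ℤ), (2:ℚ) * (a:ℚ) = 2 * (b:ℚ) → a = b := by
    intro a b h
    have : (a:ℚ) = (b:ℚ) := by linarith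
    exact_mod_cast this
  have hcadd_l : ∀ y₁ y₂ y' : ↥Lν, c (y₁ + y₂) y' = c y₁ y' + c y₂ y' := by
    intro y₁ y₂ y'
    have h1 := hc (y₁ + y₂) y'
    rw [Submodule.coe_add, map_add, LinearMap.add_apply, hc y₁ y', hc y₂ y'] at h1
    apply hcast
    push_cast
    linarith
  have hcadd_r : ∀ y y₁ y₂ : ↥Lν, c y (y₁ + y₂) = c y y₁ + c y y₂ := by
    intro y y₁ y₂
    have h1 := hc y (y₁ + y₂)
    rw [Submodule.coe_add, map_add, hc y y₁, hc y y₂] at h1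
    apply hcast
    push_cast
    linarith
  have hcsmul_l : ∀ (n : ℤ) (y y' : ↥Lν), c (n • y) y' = n * c y y' := by
    intro n y y'
    have h1 := hc (n • y) y'
    rw [Submodule.coe_smul, map_zsmul, LinearMap.smul_apply, zsmul_eq_mul,
      hc y y'] at h1
    apply hcast
    push_cast
    linarith
  have hcsmul_r : ∀ (n : ℤ) (y y' : ↥Lν), c y (n • y') = n * c y y' := by
    intro n y y'
    have h1 := hc y (n • y')
    rw [Submodule.coe_smul, map_zsmul, zsmul_eq_mul, hc y y'] at h1
    apply hcast
    push_cast
    linarith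
  -- the submodule 2·Lν
  set N2 : Submodule ℤ ↥Lν :=
    LinearMap.range ((2 : ℤ) • (LinearMap.id : ↥Lν →ₗ[ℤ] ↥Lν)) with hN2def
  have hN2mem : ∀ y : ↥Lν, y ∈ N2 ↔ ∃ y', (2 : ℤ) • y' = y := by
    intro y
    rw [hN2def, LinearMap.mem_range]
    constructor
    · rintro ⟨y', rfl⟩; exact ⟨y', rfl⟩
    · rintro ⟨y', rfl⟩; exact ⟨y', rfl⟩
  letI instZ2 : Module (ZMod 2) (↥Lν ⧸ N2) := AddCommGroup.zmodModule (by
    intro x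
    obtain ⟨y, rfl⟩ := N2.mkQ_surjective x
    rw [← map_nsmul, Submodule.mkQ_apply, Submodule.Quotient.mk_eq_zero]
    refine (hN2mem _).mpr ⟨y, ?_⟩
    rw [show ((2 : ℤ)) = ((2 : ℕ) : ℤ) by norm_num, natCast_zsmul])
  -- finiteness
  haveI hLfin : Module.Finite ℤ ↥L := Module.Finite.iff_fg.mpr hfg
  haveI : IsNoetherian ℤ ↥L := isNoetherian_of_isNoetherianRing_of_finite ℤ ↥L
  have hΛle : Lν ≤ L := fun z hz => ((hΛmem z).mp hz).1
  haveI hΛfin : Module.Finite ℤ ↥Lν :=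
    Module.Finite.equiv (Submodule.comapSubtypeEquivOfLe hΛle)
  haveI hQfin : Module.Finite ℤ (↥Lν ⧸ N2) := Module.Finite.quotient ℤ N2
  haveI hQfin2 : Module.Finite (ZMod 2) (↥Lν ⧸ N2) := by
    obtain ⟨s, hs⟩ := hQfin.fg_top
    refine ⟨⟨s, ?_⟩⟩
    have hcl : AddSubgroup.closure (↑s : Set (↥Lν ⧸ N2)) = ⊤ := by
      have := Submodule.span_int_eq_addSubgroupClosure (↑s : Set (↥Lν ⧸ N2))
      rw [hs] at this
      exact this.symm.trans rfl
    rw [← top_le_iff]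
    intro x _
    have hx : x ∈ AddSubgroup.closure (↑s : Set (↥Lν ⧸ N2)) := by
      rw [hcl]; trivial
    exact AddSubgroup.closure_le
      ((Submodule.span (ZMod 2) (↑s : Set (↥Lν ⧸ N2))).toAddSubgroup)
      |>.mpr Submodule.subset_span hx
  -- the mod-2 bilinear form on Lν ⧸ 2Lν
  let inner1 : ↥Lν → (↥Lν →ₗ[ℤ] ZMod 2) := fun y =>
    { toFun := fun y' => ((c y y' : ℤ) : ZMod 2)
      map_add' := fun y₁ y₂ => by
        show ((c y (y₁ + y₂) : ℤ) : ZMod 2)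
          = ((c y y₁ : ℤ) : ZMod 2) + ((c y y₂ : ℤ) : ZMod 2)
        rw [hcadd_r]; push_cast; ring
      map_smul' := fun n y' => by
        show ((c y (n • y') : ℤ) : ZMod 2) = n • ((c y y' : ℤ) : ZMod 2)
        rw [hcsmul_r, zsmul_eq_mul]
        push_cast
        ring }
  have hvan_r : ∀ y : ↥Lν, ∀ y' ∈ N2, inner1 y y' = 0 := by
    intro y y' hy'
    obtain ⟨y'', rfl⟩ := (hN2mem y').mp hy'
    show ((c y ((2:ℤ) • y'') : ℤ) : ZMod 2) = 0
    rw [hcsmul_r]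
    push_cast
    ring_nf
    rw [show ((2 : ZMod 2)) = 0 by decide]
    ring
  let innerQ : ↥Lν → ((↥Lν ⧸ N2) →ₗ[ℤ] ZMod 2) := fun y =>
    N2.liftQ (inner1 y) (fun y' hy' => by
      rw [LinearMap.mem_ker]; exact hvan_r y y' hy')
  have hinnerQ_mk : ∀ y y' : ↥Lν,
      innerQ y (Submodule.Quotient.mk y') = ((c y y' : ℤ) : ZMod 2) := by
    intro y y'
    rfl
  let outer : ↥Lν →ₗ[ℤ] ((↥Lν ⧸ N2) →ₗ[ℤ] ZMod 2) :=
    { toFun := innerQ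
      map_add' := fun y₁ y₂ => by
        refine Submodule.linearMap_qext N2 ?_
        ext y'
        show innerQ (y₁ + y₂) (Submodule.Quotient.mk y')
          = innerQ y₁ (Submodule.Quotient.mk y') + innerQ y₂ (Submodule.Quotient.mk y')
        rw [hinnerQ_mk, hinnerQ_mk, hinnerQ_mk, hcadd_l]
        push_cast
        ring
      map_smul' := fun n y => by
        refine Submodule.linearMap_qext N2 ?_
        ext y'
        show innerQ (n • y) (Submodule.Quotient.mk y')
          = (n • innerQ y) (Submodule.Quotient.mk y')
        rw [hinnerQ_mk, LinearMap.smul_apply, hinnerQ_mk, hcsmul_l, zsmul_eq_mul]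
        push_cast
        ring }
  let outerQ : (↥Lν ⧸ N2) →ₗ[ℤ] ((↥Lν ⧸ N2) →ₗ[ℤ] ZMod 2) :=
    N2.liftQ outer (fun y hy => by
      rw [LinearMap.mem_ker]
      obtain ⟨y'', rfl⟩ := (hN2mem y).mp hy
      refine Submodule.linearMap_qext N2 ?_
      ext y'
      show innerQ ((2:ℤ) • y'') (Submodule.Quotient.mk y') = 0
      rw [hinnerQ_mk, hcsmul_l]
      push_cast
      rw [show ((2 : ZMod 2)) = 0 by decide]
      show (0 : ZMod 2) * _ = (0 : ↥Lν ⧸ N2 →ₗ[ℤ] ZMod 2) (Submodule.Quotient.mk y')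
      rw [LinearMap.zero_apply, zero_mul])
  let bbar : (↥Lν ⧸ N2) → (↥Lν ⧸ N2) → ZMod 2 := fun a b => outerQ a b
  have hbbar_mk : ∀ y y' : ↥Lν,
      bbar (Submodule.Quotient.mk y) (Submodule.Quotient.mk y')
        = ((c y y' : ℤ) : ZMod 2) := by
    intro y y'
    rfl
  have hba : ∀ x y z, bbar (x + y) z = bbar x z + bbar y z := by
    intro x y z
    show outerQ (x + y) z = outerQ x z + outerQ y z
    rw [map_add, LinearMap.add_apply]
  have hbb : ∀ x y z, bbar x (y + z) = bbar x y + bbar x z := by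
    intro x y z
    show outerQ x (y + z) = outerQ x y + outerQ x z
    rw [map_add]
  -- the image lattice T = {y ∈ Lν | y = 2·P x for some x ∈ L}
  set Q2 : V →ₗ[ℤ] V := LinearMap.restrictScalars ℤ ((2 : ℚ) • P) with hQ2def
  set T : Submodule ℤ ↥Lν := Submodule.comap Lν.subtype (Submodule.map Q2 L) with hTdef
  have hTmem : ∀ y : ↥Lν, y ∈ T ↔ ∃ x ∈ L, (2 : ℚ) • P x = (y : V) := by
    intro y
    rw [hTdef, Submodule.mem_comap, Submodule.mem_map]
    constructor
    · rintro ⟨x, hx, hxy⟩; exact ⟨x, hx, hxy⟩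
    · rintro ⟨x, hx, hxy⟩; exact ⟨x, hx, hxy⟩
  have hN2leT : N2 ≤ T := by
    intro y hy
    obtain ⟨y'', rfl⟩ := (hN2mem y).mp hy
    rw [hTmem]
    refine ⟨(y'' : V), hΛsubL y'', ?_⟩
    rw [hPfix _ (hΛfix y'')]
    show (2 : ℚ) • (y'' : V) = (((2 : ℤ) • y'' : ↥Lν) : V)
    rw [Submodule.coe_smul, ← Int.cast_smul_eq_zsmul ℚ]
    norm_num
  set S : Submodule (ZMod 2) (↥Lν ⧸ N2) :=
    AddSubgroup.toZModSubmodule 2 (Submodule.map N2.mkQ T).toAddSubgroup with hSdef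
  have hSmem : ∀ a, a ∈ S ↔ a ∈ Submodule.map N2.mkQ T := fun a => Iff.rfl
  have hStop : S = ⊤ := by
    apply aux_zmod2_top _ bbar hba hbb
    intro yq hvan
    obtain ⟨y, rfl⟩ := N2.mkQ_surjective yq
    rw [Submodule.mkQ_apply, Submodule.Quotient.mk_eq_zero]
    have hins : ∀ x ∈ L, ∃ n : ℤ, B x (y : V) = 2 * (n : ℚ) := by
      intro x hx
      have h2P : (2 : ℚ) • P x ∈ Lν := hhalf x hx
      set t : ↥Lν := ⟨(2 : ℚ) • P x, h2P⟩ with htdef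
      have htT : t ∈ T := (hTmem t).mpr ⟨x, hx, rfl⟩
      have htS : (Submodule.Quotient.mk t : ↥Lν ⧸ N2) ∈ S :=
        (hSmem _).mpr ⟨t, htT, rfl⟩
      have h0 := hvan _ htS
      rw [show (N2.mkQ y : ↥Lν ⧸ N2) = Submodule.Quotient.mk y from rfl] at h0
      rw [hbbar_mk] at h0
      obtain ⟨k, hk⟩ := (ZMod.intCast_zmod_eq_zero_iff_dvd _ 2).mp h0
      have hBt : B (y : V) (t : V) = 2 * ((c y t : ℤ) : ℚ) := hc y t
      have hBt2 : B (y : V) ((2 : ℚ) • P x) = 2 * B (y : V) (P x) := by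
        rw [map_smul, smul_eq_mul]
      have hByP : B (y : V) (P x) = B x (y : V) := by
        rw [← hBP x (y : V) (hΛfix y), hsymm]
      refine ⟨k, ?_⟩
      have h3 : (2 : ℚ) * B x (y : V) = 2 * (((2 * k : ℤ)) : ℚ) := by
        rw [← hByP, ← hBt2]
        have : (t : V) = (2 : ℚ) • P x := rfl
        rw [← this, hBt, hk]
        push_cast
        ring
      have h4 : B x (y : V) = ((2 * k : ℤ) : ℚ) := by linarith
      rw [h4]; push_cast; ring
    have hy2L : (2 : ℚ)⁻¹ • (y : V) ∈ L := by
      have : (2 : ℚ)⁻¹ • (y : V) ∈ (L : Set V) := by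
        rw [hself]
        intro x' hx'
        obtain ⟨n, hn⟩ := hins x' hx'
        refine ⟨n, ?_⟩
        rw [map_smul, LinearMap.smul_apply, smul_eq_mul, hsymm, hn]
        ring
      exact this
    have hy2fix : ν ((2 : ℚ)⁻¹ • (y : V)) = (2 : ℚ)⁻¹ • (y : V) := by
      rw [map_smul, hΛfix y]
    have hy2Λ : (2 : ℚ)⁻¹ • (y : V) ∈ Lν := (hΛmem _).mpr ⟨hy2L, hy2fix⟩
    refine (hN2mem y).mpr ⟨⟨(2 : ℚ)⁻¹ • (y : V), hy2Λ⟩, ?_⟩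
    apply Subtype.ext
    show (2 : ℤ) • ((2 : ℚ)⁻¹ • (y : V)) = (y : V)
    rw [← Int.cast_smul_eq_zsmul ℚ, smul_smul]
    norm_num
  have hTtop : T = ⊤ := by
    rw [eq_top_iff]
    intro y _
    have hyS : (Submodule.Quotient.mk y : ↥Lν ⧸ N2) ∈ S := by rw [hStop]; trivial
    obtain ⟨y', hy'T, hy'eq⟩ := (hSmem _).mp hyS
    have hsub : y - y' ∈ N2 := by
      have : (Submodule.Quotient.mk y' : ↥Lν ⧸ N2) = Submodule.Quotient.mk y := hy'eq
      have h5 := (Submodule.Quotient.eq N2).mp this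
      simpa using N2.neg_mem h5
    have h6 := T.add_mem hy'T (hN2leT hsub)
    simpa using h6
  -- conclusion
  ext v
  constructor
  · rintro ⟨x, hx, rfl⟩
    have hfx : (fun v => (m : ℚ)⁻¹ • ∑ k ∈ Finset.range m, (ν ^ k) v) x = P x :=
      (hPapply x).symm
    rw [hfx]
    refine Set.mem_smul_set.mpr ⟨(2 : ℚ) • P x, hhalf x hx, ?_⟩
    rw [smul_smul]
    norm_num
  · intro hv
    obtain ⟨y, hy, rfl⟩ := Set.mem_smul_set.mp hv
    have h1 : (⟨y, hy⟩ : ↥Lν) ∈ T := by rw [hTtop]; trivial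
    obtain ⟨x, hx, hxeq⟩ := (hTmem _).mp h1
    refine ⟨x, hx, ?_⟩
    have hfx : (fun v => (m : ℚ)⁻¹ • ∑ k ∈ Finset.range m, (ν ^ k) v) x = P x :=
      (hPapply x).symm
    rw [hfx]
    have : (2 : ℚ) • P x = y := hxeq
    rw [← this, smul_smul]
    norm_num
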